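/- Uniqueness of the lifted wave function up to a constant phase: let ψ₁, ψ₂ ∈ H¹([a,b]) be two wave functions associated to the same hydrodynamic data (√ρ, Λ) ∈ H¹([a,b]) × L²([a,b]), i.e. √ρ = |ψ₁| = |ψ₂| and Λ = Im(φ̄₁ ∂_x ψ₁) = Im(φ̄₂ ∂_x ψ₂) a.e., where φ_j is a polar factor of ψ_j. Assume ρ > 0 on [a,b]. Then there exists θ ∈ [0, 2π) with ψ₂ = e^{iθ} ψ₁. -/

import Mathlib

open Real Complex

/-- Uniqueness of the wave function lifting up to a constant phase: if two differentiable wave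
functions `ψ₁, ψ₂` on `[a,b]` share the same hydrodynamic data `(√ρ, Λ)`, with `ρ = |ψ₁|² > 0`
on `[a,b]`, then `ψ₂ = e^{iθ} ψ₁` on `[a,b]` for some `θ ∈ [0, 2π)`.  Since the density is
strictly positive, the polar factor is `φ_j = ψ_j / |ψ_j|`. -/
theorem lifting_unique_up_to_phase
    (a b : ℝ) (hab : a ≤ b) (ψ₁ ψ₂ : ℝ → ℂ)
    (hψ₁ : Differentiable ℝ ψ₁) (hψ₂ : Differentiable ℝ ψ₂)
    (hpos : ∀ x ∈ Set.Icc a b, ψ₁ x ≠ 0)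
    (hamp : ∀ x ∈ Set.Icc a b, ‖ψ₁ x‖ = ‖ψ₂ x‖)
    (hΛ : ∀ x ∈ Set.Icc a b,
      (starRingEnd ℂ (ψ₁ x / (‖ψ₁ x‖ : ℂ)) * deriv ψ₁ x).im
        = (starRingEnd ℂ (ψ₂ x / (‖ψ₂ x‖ : ℂ)) * deriv ψ₂ x).im) :
    ∃ θ ∈ Set.Ico (0:ℝ) (2 * π),
      ∀ x ∈ Set.Icc a b, ψ₂ x = Complex.exp (θ * Complex.I) * ψ₁ x := by
  have hpos₂ : ∀ x ∈ Set.Icc a b, ψ₂ x ≠ 0 := by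
    intro x hx h
    apply hpos x hx
    have := hamp x hx
    rw [h, norm_zero] at this
    exact norm_eq_zero.mp this
  -- the complex equality |ψ₁|² = |ψ₂|² via conjugates
  have hN : ∀ x ∈ Set.Icc a b,
      starRingEnd ℂ (ψ₁ x) * ψ₁ x = starRingEnd ℂ (ψ₂ x) * ψ₂ x := by
    intro x hx
    rw [Complex.conj_mul', Complex.conj_mul']
    norm_cast
    rw [hamp x hx]
  -- equality of imaginary parts of conj ψ * ψ'
  have hIm : ∀ x ∈ Set.Icc a b,
      (starRingEnd ℂ (ψ₁ x) * deriv ψ₁ x).im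
        = (starRingEnd ℂ (ψ₂ x) * deriv ψ₂ x).im := by
    intro x hx
    have h := hΛ x hx
    have hr : ‖ψ₁ x‖ ≠ 0 := norm_ne_zero_iff.mpr (hpos x hx)
    rw [map_div₀, Complex.conj_ofReal, div_mul_eq_mul_div, Complex.div_ofReal_im,
      map_div₀, Complex.conj_ofReal, div_mul_eq_mul_div, Complex.div_ofReal_im,
      ← hamp x hx] at h
    rw [div_eq_div_iff hr hr] at h
    exact mul_right_cancel₀ hr h
  -- the key: conj ψ₁ * ψ₁' = conj ψ₂ * ψ₂' on [a,b)
  have hK : ∀ x ∈ Set.Ico a b,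
      starRingEnd ℂ (ψ₁ x) * deriv ψ₁ x = starRingEnd ℂ (ψ₂ x) * deriv ψ₂ x := by
    intro x hx
    have hxI : x ∈ Set.Icc a b := Set.mem_of_mem_of_subset hx Set.Ico_subset_Icc_self
    -- the difference of squared moduli, as a complex function
    set g : ℝ → ℂ := fun y => starRingEnd ℂ (ψ₁ y) * ψ₁ y - starRingEnd ℂ (ψ₂ y) * ψ₂ y
      with hg
    set D : ℂ := (starRingEnd ℂ (deriv ψ₁ x) * ψ₁ x + starRingEnd ℂ (ψ₁ x) * deriv ψ₁ x)
      - (starRingEnd ℂ (deriv ψ₂ x) * ψ₂ x + starRingEnd ℂ (ψ₂ x) * deriv ψ₂ x) with hD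
    have hgD : HasDerivAt g D x := by
      exact (((hψ₁ x).hasDerivAt.star.mul (hψ₁ x).hasDerivAt).sub
        ((hψ₂ x).hasDerivAt.star.mul (hψ₂ x).hasDerivAt))
    have hmem : Set.Icc a b ∈ nhdsWithin x (Set.Ici x) := Icc_mem_nhdsGE_of_mem hx
    have hg0 : HasDerivWithinAt g 0 (Set.Ici x) x := by
      apply (hasDerivWithinAt_const x _ (0:ℂ)).congr_of_eventuallyEq
      · filter_upwards [hmem] with y hy
        simpa [hg] using (sub_eq_zero.2 (hN y hy))
      · simpa [hg] using (sub_eq_zero.2 (hN x hxI))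
    have hud : UniqueDiffWithinAt ℝ (Set.Ici x) x :=
      uniqueDiffOn_Ici x x (Set.self_mem_Ici)
    have hD0 : D = 0 := by
      rw [← hgD.hasDerivWithinAt.derivWithin hud, hg0.derivWithin hud]
    -- real parts agree
    have hRe : (starRingEnd ℂ (ψ₁ x) * deriv ψ₁ x).re
        = (starRingEnd ℂ (ψ₂ x) * deriv ψ₂ x).re := by
      have := congrArg Complex.re hD0
      simp only [hD, Complex.sub_re, Complex.add_re, Complex.zero_re] at this
      have e₁ : (starRingEnd ℂ (deriv ψ₁ x) * ψ₁ x).re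
          = (starRingEnd ℂ (ψ₁ x) * deriv ψ₁ x).re := by
        rw [← Complex.conj_re (starRingEnd ℂ (deriv ψ₁ x) * ψ₁ x)]
        simp [mul_comm]
      have e₂ : (starRingEnd ℂ (deriv ψ₂ x) * ψ₂ x).re
          = (starRingEnd ℂ (ψ₂ x) * deriv ψ₂ x).re := by
        rw [← Complex.conj_re (starRingEnd ℂ (deriv ψ₂ x) * ψ₂ x)]
        simp [mul_comm]
      rw [e₁, e₂] at this
      linarith
    exact Complex.ext hRe (hIm x hxI)
  -- numerator of (ψ₂/ψ₁)' vanishes on [a,b)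
  have hnum : ∀ x ∈ Set.Ico a b, deriv ψ₂ x * ψ₁ x - ψ₂ x * deriv ψ₁ x = 0 := by
    intro x hx
    have hxI : x ∈ Set.Icc a b := Set.mem_of_mem_of_subset hx Set.Ico_subset_Icc_self
    have h1 := hK x hx
    have h2 := hN x hxI
    have h3 : (deriv ψ₂ x * ψ₁ x - ψ₂ x * deriv ψ₁ x)
        * (starRingEnd ℂ (ψ₁ x) * starRingEnd ℂ (ψ₂ x)) = 0 := by
      linear_combination (starRingEnd ℂ (ψ₂ x) * deriv ψ₂ x) * h2
        - (starRingEnd ℂ (ψ₂ x) * ψ₂ x) * h1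
    rcases mul_eq_zero.mp h3 with h | h
    · exact h
    · exfalso
      rcases mul_eq_zero.mp h with h' | h'
      · exact hpos x hxI (by simpa using congrArg (starRingEnd ℂ) h')
      · exact hpos₂ x hxI (by simpa using congrArg (starRingEnd ℂ) h')
  -- the quotient is constant on [a,b]
  set f : ℝ → ℂ := fun x => ψ₂ x / ψ₁ x with hf
  have hfc : ∀ x ∈ Set.Icc a b, f x = f a := by
    apply constant_of_has_deriv_right_zero
    · exact ContinuousOn.div hψ₂.continuous.continuousOn hψ₁.continuous.continuousOn hpos
    · intro x hx
      have hxI : x ∈ Set.Icc a b := Set.mem_of_mem_of_subset hx Set.Ico_subset_Icc_self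
      have hd : HasDerivAt f ((deriv ψ₂ x * ψ₁ x - ψ₂ x * deriv ψ₁ x) / (ψ₁ x) ^ 2) x :=
        (hψ₂ x).hasDerivAt.div (hψ₁ x).hasDerivAt (hpos x hxI)
      rw [hnum x hx, zero_div] at hd
      exact hd.hasDerivWithinAt
  -- the constant has modulus one
  have haI : a ∈ Set.Icc a b := ⟨le_refl a, hab⟩
  set c : ℂ := ψ₂ a / ψ₁ a with hc
  have habs : ‖c‖ = 1 := by
    rw [hc, norm_div, ← hamp a haI, div_self (norm_ne_zero_iff.mpr (hpos a haI))]
  have hcexp : Complex.exp (Complex.arg c * Complex.I) = c := by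
    have := Complex.norm_mul_exp_arg_mul_I c
    rwa [habs, Complex.ofReal_one, one_mul] at this
  -- choose θ ∈ [0, 2π)
  set θ : ℝ := if 0 ≤ Complex.arg c then Complex.arg c else Complex.arg c + 2 * π with hθ
  have hargle := Complex.arg_le_pi c
  have harggt := Complex.neg_pi_lt_arg c
  have hpi : (0:ℝ) < π := Real.pi_pos
  refine ⟨θ, ?_, ?_⟩
  · rw [hθ]
    split_ifs with h
    · exact ⟨h, by linarith⟩
    · constructor <;> [linarith; linarith [not_le.mp h]]
  · intro x hx
    have hexpθ : Complex.exp (θ * Complex.I) = c := by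
      rw [hθ]
      split_ifs with h
      · exact hcexp
      · push_cast
        rw [add_mul, Complex.exp_add, Complex.exp_two_pi_mul_I, mul_one]
        exact hcexp
    have := hfc x hx
    rw [hf] at this
    simp only at this
    rw [hexpθ, hc, ← this, div_mul_cancel₀ _ (hpos x hx)]
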